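/- Let G be a simple connected graph and let v_1, v_2 be distinct vertices of G with d(v_2) − d(v_1) ≥ 2. Let w be a neighbor of v_2 that is neither v_1 nor a neighbor of v_1, and let G_2 = G − v_2w + v_1w (so that in G_2 the degree of v_1 increases by 1, the degree of v_2 decreases by 1, and all other degrees are unchanged). Then Π2(G_2) < Π2(G). -/

import Mathlib

open SimpleGraph Finset

/-- Degree of a vertex (as `Nat.card` of its neighbor set). -/
noncomputable def mdeg {V : Type*} (G : SimpleGraph V) (v : V) : ℕ :=
  Nat.card (G.neighborSet v)

/-- First multiplicative Zagreb index. -/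
noncomputable def mZ1 {V : Type*} [Fintype V] (G : SimpleGraph V) : ℕ :=
  ∏ v : V, (mdeg G v) ^ 2

/-- Second multiplicative Zagreb index. -/
noncomputable def mZ2 {V : Type*} [Fintype V] (G : SimpleGraph V) : ℕ :=
  ∏ v : V, (mdeg G v) ^ (mdeg G v)

private lemma bern' (p n : ℕ) : p ^ n ≤ (p - 1) ^ n + n * p ^ (n - 1) := by
  induction n with
  | zero => simp
  | succ n ih =>
    rcases Nat.eq_zero_or_pos p with hp | hp
    · subst hp; simp
    have hn : n * (p * p ^ (n - 1)) = n * p ^ n := by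
      cases n with
      | zero => simp
      | succ m => simp [pow_succ]; ring
    calc p ^ (n + 1) = p * p ^ n := by ring
      _ ≤ p * ((p - 1) ^ n + n * p ^ (n - 1)) := Nat.mul_le_mul_left _ ih
      _ = p * (p - 1) ^ n + n * (p * p ^ (n - 1)) := by ring
      _ = ((p - 1) + 1) * (p - 1) ^ n + n * p ^ n := by rw [hn, Nat.sub_add_cancel hp]
      _ = (p - 1) ^ (n + 1) + (p - 1) ^ n + n * p ^ n := by ring
      _ ≤ (p - 1) ^ (n + 1) + p ^ n + n * p ^ n := by
          have := Nat.pow_le_pow_left (Nat.sub_le p 1) n; omega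
      _ = (p - 1) ^ (n + 1) + (n + 1) * p ^ ((n + 1) - 1) := by simp; ring

private lemma core' (n : ℕ) : (n + 1) ^ (2 * n + 2) < n ^ n * (n + 2) ^ (n + 2) := by
  cases n with
  | zero => norm_num
  | succ m =>
    obtain ⟨p, hp⟩ : ∃ p, p = (m + 1) * (m + 3) := ⟨_, rfl⟩
    have hp1 : p + 1 = (m + 2) ^ 2 := by rw [hp]; ring
    have hpn : m + 1 < p := by rw [hp]; nlinarith
    have hppos : 0 < p := by omega
    have hA : (p + 1) ^ (m + 1) * (p - 1) ^ (m + 1) ≤ p ^ (2 * m + 2) := by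
      rw [← mul_pow]
      have h1 : (p + 1) * (p - 1) ≤ p * p := by
        obtain ⟨d, hd⟩ : ∃ d, p = d + 1 := ⟨p - 1, by omega⟩
        rw [hd]; simp; nlinarith
      calc ((p + 1) * (p - 1)) ^ (m + 1) ≤ (p * p) ^ (m + 1) :=
            Nat.pow_le_pow_left h1 _
        _ = p ^ (2 * m + 2) := by rw [← pow_two, ← pow_mul]; ring_nf
    have hB : p ^ m * (p - (m + 1)) ≤ (p - 1) ^ (m + 1) := by
      have h0 : p - (m + 1) + (m + 1) = p := by omega
      have h1 : p ^ m * (p - (m + 1)) + (m + 1) * p ^ m = p ^ (m + 1) := by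
        calc p ^ m * (p - (m + 1)) + (m + 1) * p ^ m
            = p ^ m * ((p - (m + 1)) + (m + 1)) := by ring
          _ = p ^ m * p := by rw [h0]
          _ = p ^ (m + 1) := by rw [pow_succ]
      have h2 := bern' p (m + 1)
      simp only [Nat.add_sub_cancel] at h2
      omega
    have hC : p * (m + 2) ^ 2 < (m + 3) ^ 2 * (p - (m + 1)) := by
      have h1 : p - (m + 1) = (m + 1) * (m + 2) := by
        have h2 : p = m * m + 4 * m + 3 := by rw [hp]; ring
        have h3 : (m + 1) * (m + 2) = m * m + 3 * m + 2 := by ring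
        omega
      rw [h1, hp]; nlinarith
    have tpos : 0 < p ^ m * (p - (m + 1)) := by
      have h1 : 0 < p - (m + 1) := by omega
      have h2 : 0 < p ^ m := Nat.pow_pos (n := m) hppos
      positivity
    have hmain : (p + 1) ^ (m + 1) * (m + 2) ^ 2 < p ^ (m + 1) * (m + 3) ^ 2 := by
      apply Nat.lt_of_mul_lt_mul_right (a := p ^ m * (p - (m + 1)))
      have hpowpos : 0 < p ^ (2 * m + 1) := Nat.pow_pos hppos
      calc (p + 1) ^ (m + 1) * (m + 2) ^ 2 * (p ^ m * (p - (m + 1)))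
          = (p ^ m * (p - (m + 1))) * ((m + 2) ^ 2 * (p + 1) ^ (m + 1)) := by ring
        _ ≤ (p - 1) ^ (m + 1) * ((m + 2) ^ 2 * (p + 1) ^ (m + 1)) :=
            Nat.mul_le_mul_right _ hB
        _ = (p + 1) ^ (m + 1) * (p - 1) ^ (m + 1) * (m + 2) ^ 2 := by ring
        _ ≤ p ^ (2 * m + 2) * (m + 2) ^ 2 := Nat.mul_le_mul_right _ hA
        _ = p ^ (2 * m + 1) * (p * (m + 2) ^ 2) := by ring
        _ < p ^ (2 * m + 1) * ((m + 3) ^ 2 * (p - (m + 1))) :=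
            mul_lt_mul_of_pos_left hC hpowpos
        _ = p ^ (m + 1) * (m + 3) ^ 2 * (p ^ m * (p - (m + 1))) := by ring
    calc (m + 1 + 1) ^ (2 * (m + 1) + 2) = (p + 1) ^ (m + 1) * (m + 2) ^ 2 := by
          rw [hp1, ← pow_mul, ← pow_add]
      _ < p ^ (m + 1) * (m + 3) ^ 2 := hmain
      _ = (m + 1) ^ (m + 1) * (m + 1 + 2) ^ (m + 1 + 2) := by
          rw [hp, mul_pow, pow_succ (m+3)]; ring

private lemma gmono' (m n : ℕ) (h : m < n) :
    (m + 1) ^ (m + 1) * n ^ n < m ^ m * (n + 1) ^ (n + 1) := by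
  induction n, h using Nat.le_induction with
  | base =>
    calc (m + 1) ^ (m + 1) * (m + 1) ^ (m + 1) = (m + 1) ^ (2 * m + 2) := by
          rw [← pow_add]; ring_nf
      _ < m ^ m * (m + 2) ^ (m + 2) := core' m
      _ = m ^ m * (m + 1 + 1) ^ (m + 1 + 1) := by norm_num
  | succ n hn ih =>
    have hc := core' n
    have hmpos : 0 < m ^ m := by
      cases m with
      | zero => simp
      | succ k => exact Nat.pow_pos (by omega)
    apply Nat.lt_of_mul_lt_mul_right (a := n ^ n)
    calc (m + 1) ^ (m + 1) * (n + 1) ^ (n + 1) * n ^ n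
        = (m + 1) ^ (m + 1) * n ^ n * (n + 1) ^ (n + 1) := by ring
      _ < m ^ m * (n + 1) ^ (n + 1) * (n + 1) ^ (n + 1) :=
          mul_lt_mul_of_pos_right ih (Nat.pow_pos (by omega))
      _ = m ^ m * (n + 1) ^ (2 * n + 2) := by rw [mul_assoc, ← pow_add]; ring_nf
      _ < m ^ m * (n ^ n * (n + 2) ^ (n + 2)) := mul_lt_mul_of_pos_left hc hmpos
      _ = m ^ m * (n + 1 + 1) ^ (n + 1 + 1) * n ^ n := by ring_nf

private lemma keyineq' (a b : ℕ) (h : a + 2 ≤ b) :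
    (a + 1) ^ (a + 1) * (b - 1) ^ (b - 1) < a ^ a * b ^ b := by
  obtain ⟨c, rfl⟩ : ∃ c, b = c + 1 := ⟨b - 1, by omega⟩
  simpa using gmono' a c (by omega)

private lemma mdeg_eq' {V : Type*} (G : SimpleGraph V) (v : V) :
    mdeg G v = (G.neighborSet v).ncard := rfl

private lemma powpos (x : ℕ) : 0 < x ^ x := by
  cases x with
  | zero => simp
  | succ k => exact Nat.pow_pos (by omega)

theorem stmt16 {V : Type*} [Fintype V] (G : SimpleGraph V) (hG : G.Connected)
    (v₁ v₂ : V) (hd : mdeg G v₁ + 2 ≤ mdeg G v₂)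
    (w : V) (hw : G.Adj v₂ w) (hwv₁ : w ≠ v₁) (hwadj : ¬ G.Adj v₁ w) :
    mZ2 (G.deleteEdges {s(v₂, w)} ⊔ SimpleGraph.fromEdgeSet {s(v₁, w)}) < mZ2 G := by
  classical
  have hv12 : v₁ ≠ v₂ := by intro h; rw [h] at hd; omega
  set G₂ := G.deleteEdges {s(v₂, w)} ⊔ SimpleGraph.fromEdgeSet {s(v₁, w)} with hG₂
  have hadj : ∀ a b : V, G₂.Adj a b ↔
      (G.Adj a b ∧ ¬(s(a, b) = s(v₂, w))) ∨ (s(a, b) = s(v₁, w) ∧ a ≠ b) := by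
    intro a b
    simp [hG₂, SimpleGraph.deleteEdges_adj, SimpleGraph.fromEdgeSet_adj]
  have hv2w : v₂ ≠ w := G.ne_of_adj hw
  -- neighbor set of v₁ gains w
  have h1 : G₂.neighborSet v₁ = insert w (G.neighborSet v₁) := by
    ext x
    simp only [SimpleGraph.mem_neighborSet, hadj, Sym2.eq_iff, Set.mem_insert_iff]
    constructor
    · rintro (⟨h, -⟩ | ⟨(⟨-, rfl⟩ | ⟨h1, h2⟩), hne⟩)
      · exact Or.inr h
      · exact Or.inl rfl
      · exact absurd h1.symm hwv₁
    · rintro (rfl | h)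
      · exact Or.inr ⟨by tauto, fun h => hwv₁ h.symm⟩
      · refine Or.inl ⟨h, ?_⟩
        rintro (⟨rfl, rfl⟩ | ⟨rfl, rfl⟩)
        · exact hv12 rfl
        · exact hwv₁ rfl
  have d1 : mdeg G₂ v₁ = mdeg G v₁ + 1 := by
    rw [mdeg_eq', mdeg_eq', h1,
      Set.ncard_insert_of_notMem (by exact hwadj) (Set.toFinite _)]
  -- neighbor set of v₂ loses w
  have h2 : G₂.neighborSet v₂ = G.neighborSet v₂ \ {w} := by
    ext x
    simp only [SimpleGraph.mem_neighborSet, hadj, Sym2.eq_iff, Set.mem_diff,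
      Set.mem_singleton_iff]
    constructor
    · rintro (⟨h, hne⟩ | ⟨(⟨rfl, rfl⟩ | ⟨rfl, rfl⟩), hne⟩)
      · exact ⟨h, fun hx => hne (by tauto)⟩
      · exact absurd rfl (Ne.symm hv12)
      · exact absurd rfl hv2w
    · rintro ⟨h, hne⟩
      exact Or.inl ⟨h, by rintro (⟨-, rfl⟩ | ⟨rfl, -⟩) <;> simp_all⟩
  have d2 : mdeg G₂ v₂ = mdeg G v₂ - 1 := by
    rw [mdeg_eq', mdeg_eq', h2]
    rw [Set.ncard_diff_singleton_of_mem (by exact hw)]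
  -- neighbor set of w : loses v₂, gains v₁
  have h3 : G₂.neighborSet w = insert v₁ (G.neighborSet w \ {v₂}) := by
    ext x
    simp only [SimpleGraph.mem_neighborSet, hadj, Sym2.eq_iff, Set.mem_insert_iff,
      Set.mem_diff, Set.mem_singleton_iff]
    constructor
    · rintro (⟨h, hne⟩ | ⟨(⟨rfl, rfl⟩ | ⟨-, rfl⟩), hne⟩)
      · exact Or.inr ⟨h, fun hx => hne (by tauto)⟩
      · exact absurd rfl hwv₁
      · exact Or.inl rfl
    · rintro (rfl | ⟨h, hne⟩)
      · exact Or.inr ⟨by tauto, hwv₁⟩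
      · refine Or.inl ⟨h, ?_⟩
        rintro (⟨rfl, -⟩ | ⟨-, rfl⟩)
        · exact hv2w rfl
        · exact hne rfl
  have d3 : mdeg G₂ w = mdeg G w := by
    rw [mdeg_eq', mdeg_eq', h3]
    have hv1 : v₁ ∉ G.neighborSet w \ {v₂} := by
      rintro ⟨hx, -⟩
      exact hwadj (G.adj_symm hx)
    rw [Set.ncard_insert_of_notMem hv1 (Set.toFinite _),
      Set.ncard_diff_singleton_of_mem (by exact G.adj_symm hw)]
    have : 0 < (G.neighborSet w).ncard := by
      rw [Set.ncard_pos (Set.toFinite _)]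
      exact ⟨v₂, G.adj_symm hw⟩
    omega
  -- neighbor sets of other vertices unchanged
  have d4 : ∀ u, u ≠ v₁ → u ≠ v₂ → mdeg G₂ u = mdeg G u := by
    intro u hu1 hu2
    rcases eq_or_ne u w with rfl | huw
    · exact d3
    have : G₂.neighborSet u = G.neighborSet u := by
      ext x
      simp only [SimpleGraph.mem_neighborSet, hadj, Sym2.eq_iff]
      constructor
      · rintro (⟨h, -⟩ | ⟨(⟨rfl, -⟩ | ⟨rfl, -⟩), -⟩)
        · exact h
        · exact absurd rfl hu1
        · exact absurd rfl huw
      · intro h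
        refine Or.inl ⟨h, ?_⟩
        rintro (⟨rfl, -⟩ | ⟨rfl, -⟩)
        · exact hu2 rfl
        · exact huw rfl
    rw [mdeg_eq', mdeg_eq', this]
  -- assemble products
  have hmem2 : v₂ ∈ (univ : Finset V).erase v₁ := by
    simp [Finset.mem_erase, Ne.symm hv12]
  have split : ∀ (f : V → ℕ), ∏ v : V, f v =
      f v₁ * (f v₂ * ∏ v ∈ ((univ : Finset V).erase v₁).erase v₂, f v) := by
    intro f
    rw [Finset.mul_prod_erase _ _ hmem2, Finset.mul_prod_erase _ _ (mem_univ v₁)]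
  have e2 : mZ2 G₂ = (mdeg G₂ v₁) ^ (mdeg G₂ v₁) * ((mdeg G₂ v₂) ^ (mdeg G₂ v₂) *
      ∏ v ∈ ((univ : Finset V).erase v₁).erase v₂, (mdeg G v) ^ (mdeg G v)) := by
    rw [mZ2, split]
    congr 2
    apply Finset.prod_congr rfl
    intro x hx
    simp only [Finset.mem_erase] at hx
    rw [d4 x hx.2.1 hx.1]
  have e1 : mZ2 G = (mdeg G v₁) ^ (mdeg G v₁) * ((mdeg G v₂) ^ (mdeg G v₂) *
      ∏ v ∈ ((univ : Finset V).erase v₁).erase v₂, (mdeg G v) ^ (mdeg G v)) := by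
    rw [mZ2, split]
  rw [e1, e2, d1, d2]
  have key := keyineq' (mdeg G v₁) (mdeg G v₂) hd
  have tpos : 0 < ∏ v ∈ ((univ : Finset V).erase v₁).erase v₂,
      (mdeg G v) ^ (mdeg G v) := Finset.prod_pos fun i _ => powpos _
  calc (mdeg G v₁ + 1) ^ (mdeg G v₁ + 1) * ((mdeg G v₂ - 1) ^ (mdeg G v₂ - 1) *
        ∏ v ∈ ((univ : Finset V).erase v₁).erase v₂, (mdeg G v) ^ (mdeg G v))
      = ((mdeg G v₁ + 1) ^ (mdeg G v₁ + 1) * (mdeg G v₂ - 1) ^ (mdeg G v₂ - 1)) *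
        ∏ v ∈ ((univ : Finset V).erase v₁).erase v₂, (mdeg G v) ^ (mdeg G v) := by ring
    _ < ((mdeg G v₁) ^ (mdeg G v₁) * (mdeg G v₂) ^ (mdeg G v₂)) *
        ∏ v ∈ ((univ : Finset V).erase v₁).erase v₂, (mdeg G v) ^ (mdeg G v) :=
        mul_lt_mul_of_pos_right key tpos
    _ = (mdeg G v₁) ^ (mdeg G v₁) * ((mdeg G v₂) ^ (mdeg G v₂) *
        ∏ v ∈ ((univ : Finset V).erase v₁).erase v₂, (mdeg G v) ^ (mdeg G v)) := by ring
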